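/- For every m ≥ 3, the set V(G²₃) ∪ (V(G²₂) \ {u}) (all of the third copy of Cₘ together with all but one vertex of the second copy) is a global defensive alliance of P₄ ∘ Cₘ of cardinality 2m − 1. -/

import Mathlib

/-- Lexicographic product of simple graphs. -/
def lexProd {α β : Type*} (G : SimpleGraph α) (H : SimpleGraph β) :
    SimpleGraph (α × β) where
  Adj x y := G.Adj x.1 y.1 ∨ (x.1 = y.1 ∧ H.Adj x.2 y.2)
  symm := by
    constructor
    rintro x y (h | ⟨h1, h2⟩)
    · exact Or.inl h.symm
    · exact Or.inr ⟨h1.symm, h2.symm⟩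
  loopless := by
    constructor
    rintro x (h | ⟨_, h2⟩)
    · exact G.irrefl h
    · exact H.irrefl h2

/-- Closed neighborhood N[v]. -/
def closedNbhd {α : Type*} (G : SimpleGraph α) (v : α) : Set α :=
  insert v (G.neighborSet v)

/-- A defensive alliance: every vertex of S is defended. -/
def IsDefensiveAlliance {α : Type*} (G : SimpleGraph α) (S : Set α) : Prop :=
  ∀ v ∈ S, ((closedNbhd G v) \ S).ncard ≤ ((closedNbhd G v) ∩ S).ncard

/-- A global defensive alliance: a defensive alliance which is also dominating. -/
def IsGDA {α : Type*} (G : SimpleGraph α) (S : Set α) : Prop :=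
  IsDefensiveAlliance G S ∧ ∀ v, v ∈ S ∨ ∃ u ∈ S, G.Adj v u

/-- The global defensive alliance number. -/
noncomputable def gdaNumber {α : Type*} (G : SimpleGraph α) : ℕ :=
  sInf {k | ∃ S : Set α, IsGDA G S ∧ S.ncard = k}

/-- Number of vertices of S in the j-th copy of G² (copies indexed 1,…,n). -/
noncomputable def copyCount {n m : ℕ} (S : Set (Fin n × Fin m)) (j : ℕ) : ℕ :=
  (S ∩ {p | (p.1 : ℕ) + 1 = j}).ncard

lemma aux_add_one_ne (k : ℕ) (x : Fin (k+3)) : x + 1 ≠ x := by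
  intro h
  have h1 : (1 : Fin (k+3)) = 0 := add_eq_left.mp h
  simp [Fin.ext_iff, Nat.mod_eq_of_lt] at h1

lemma aux_cyc_adj (k : ℕ) (x : Fin (k+3)) :
    (SimpleGraph.cycleGraph (k+3)).Adj x (x + 1) := by
  rw [SimpleGraph.cycleGraph_adj']
  right
  rw [add_sub_cancel_left]
  simp [Fin.val_one', Nat.mod_eq_of_lt]

lemma aux_row_ncard (m : ℕ) (i : Fin 4) : {p : Fin 4 × Fin m | p.1 = i}.ncard = m := by
  have : {p : Fin 4 × Fin m | p.1 = i} = (fun y => (i, y)) '' Set.univ := by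
    ext p
    simp [eq_comm, Prod.ext_iff]
  rw [this, Set.ncard_image_of_injective _ (fun a b h => ((Prod.mk.injEq _ _ _ _).mp h).2),
    Set.ncard_univ]
  simp

theorem stmt_19 (m : ℕ) (hm : 3 ≤ m) (u : Fin m) :
    IsGDA (lexProd (SimpleGraph.pathGraph 4) (SimpleGraph.cycleGraph m))
      ({p : Fin 4 × Fin m | p.1 = 2} ∪ ({p : Fin 4 × Fin m | p.1 = 1} \ {((1 : Fin 4), u)})) ∧
    ({p : Fin 4 × Fin m | p.1 = 2} ∪
        ({p : Fin 4 × Fin m | p.1 = 1} \ {((1 : Fin 4), u)})).ncard = 2 * m - 1 := by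
  obtain ⟨k, rfl⟩ : ∃ k, m = k + 3 := ⟨m - 3, by omega⟩
  set G := lexProd (SimpleGraph.pathGraph 4) (SimpleGraph.cycleGraph (k+3)) with hG
  set S : Set (Fin 4 × Fin (k+3)) :=
    {p | p.1 = 2} ∪ ({p | p.1 = 1} \ {((1 : Fin 4), u)}) with hSdef
  have hmemS : ∀ p : Fin 4 × Fin (k+3),
      p ∈ S ↔ p.1 = 2 ∨ (p.1 = 1 ∧ p ≠ ((1 : Fin 4), u)) := by
    intro p
    simp [hSdef]
  have hadj : ∀ a b : Fin 4 × Fin (k+3), G.Adj a b ↔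
      (((a.1 : ℕ) + 1 = (b.1 : ℕ) ∨ (b.1 : ℕ) + 1 = (a.1 : ℕ)) ∨
        (a.1 = b.1 ∧ ((a.2 - b.2).val = 1 ∨ (b.2 - a.2).val = 1))) := by
    intro a b
    simp [hG, lexProd, SimpleGraph.pathGraph_adj, SimpleGraph.cycleGraph_adj']
  have hmemN : ∀ v p : Fin 4 × Fin (k+3), p ∈ closedNbhd G v ↔ p = v ∨ G.Adj v p := by
    intro v p
    simp [closedNbhd, SimpleGraph.mem_neighborSet]
  refine ⟨⟨?_, ?_⟩, ?_⟩
  · -- defensive alliance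
    intro v hv
    rcases (hmemS v).mp hv with hv2 | ⟨hv1, hvne⟩
    · -- v in row 2
      obtain ⟨i, x⟩ := v
      simp only at hv2
      subst hv2
      have hdiff : ∀ p ∈ closedNbhd G ((2 : Fin 4), x) \ S,
          (p.1 = 3 ∧ p ≠ ((1 : Fin 4), u)) ∨ p = ((1 : Fin 4), u) := by
        rintro ⟨j, y⟩ ⟨hpN, hpS⟩
        rw [hmemN] at hpN
        rw [hmemS] at hpS
        push_neg at hpS
        obtain ⟨hj2, hj1⟩ := hpS
        simp only at hj2 hj1
        rcases hpN with heq | hadj'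
        · exact absurd (congrArg Prod.fst heq) hj2
        · rw [hadj] at hadj'
          rcases hadj' with (h | h) | ⟨h, _⟩
          · left
            have h' : (2 : ℕ) + 1 = (j : ℕ) := h
            have hj : j = 3 := by
              have := j.isLt
              rw [Fin.ext_iff, show ((3 : Fin 4) : ℕ) = 3 from rfl]
              omega
            refine ⟨hj, fun hcon => ?_⟩
            subst hj
            simp [Prod.ext_iff] at hcon
          · right
            have h' : (j : ℕ) + 1 = 2 := h
            have hj : j = 1 := by
              have := j.isLt
              rw [Fin.ext_iff, show ((1 : Fin 4) : ℕ) = 1 from rfl]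
              omega
            exact hj1 hj
          · exact absurd h.symm hj2
      set f : Fin 4 × Fin (k+3) → Fin 4 × Fin (k+3) := fun p =>
        if p = ((1 : Fin 4), u) then ((2 : Fin 4), x + 1)
        else if p.2 = u then ((2 : Fin 4), x) else ((1 : Fin 4), p.2) with hf
      have hv_self : ((2 : Fin 4), x) ∈ closedNbhd G ((2 : Fin 4), x) :=
        (hmemN _ _).mpr (Or.inl rfl)
      have hmaps : ∀ p ∈ closedNbhd G ((2 : Fin 4), x) \ S,
          f p ∈ closedNbhd G ((2 : Fin 4), x) ∩ S := by
        intro p hp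
        rcases hdiff p hp with ⟨hp3, hpne⟩ | hpu
        · simp only [hf, if_neg hpne]
          by_cases hy : p.2 = u
          · rw [if_pos hy]
            exact ⟨hv_self, (hmemS _).mpr (Or.inl rfl)⟩
          · rw [if_neg hy]
            refine ⟨(hmemN _ _).mpr (Or.inr ?_), (hmemS _).mpr (Or.inr ⟨rfl, ?_⟩)⟩
            · rw [hadj]; left; right; rfl
            · exact fun hcon => hy (congrArg Prod.snd hcon)
        · simp only [hf, if_pos hpu]
          refine ⟨(hmemN _ _).mpr (Or.inr ?_), (hmemS _).mpr (Or.inl rfl)⟩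
          rw [hadj]
          right
          refine ⟨rfl, Or.inr ?_⟩
          show ((x + 1) - x).val = 1
          rw [add_sub_cancel_left, Fin.val_one']
          exact Nat.mod_eq_of_lt (by omega)
      have hinj : Set.InjOn f (closedNbhd G ((2 : Fin 4), x) \ S) := by
        intro p hp q hq hfpq
        rcases hdiff p hp with ⟨hp3, hpne⟩ | hpu
        · rcases hdiff q hq with ⟨hq3, hqne⟩ | hqu
          · simp only [hf, if_neg hpne, if_neg hqne] at hfpq
            by_cases hy : p.2 = u <;> by_cases hz : q.2 = u
            · exact Prod.ext (hp3.trans hq3.symm) (hy.trans hz.symm)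
            · rw [if_pos hy, if_neg hz] at hfpq
              exact absurd hfpq (by simp [Prod.ext_iff])
            · rw [if_neg hy, if_pos hz] at hfpq
              exact absurd hfpq (by simp [Prod.ext_iff])
            · rw [if_neg hy, if_neg hz] at hfpq
              injection hfpq with h1 h2
              exact Prod.ext (hp3.trans hq3.symm) h2
          · exfalso
            simp only [hf, if_neg hpne, if_pos hqu] at hfpq
            by_cases hy : p.2 = u
            · rw [if_pos hy] at hfpq
              injection hfpq with h1 h2
              exact aux_add_one_ne k x h2.symm
            · rw [if_neg hy] at hfpq
              exact absurd hfpq (by simp [Prod.ext_iff])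
        · rcases hdiff q hq with ⟨hq3, hqne⟩ | hqu
          · exfalso
            simp only [hf, if_pos hpu, if_neg hqne] at hfpq
            by_cases hz : q.2 = u
            · rw [if_pos hz] at hfpq
              injection hfpq with h1 h2
              exact aux_add_one_ne k x h2
            · rw [if_neg hz] at hfpq
              exact absurd hfpq (by simp [Prod.ext_iff])
          · exact hpu.trans hqu.symm
      exact Set.ncard_le_ncard_of_injOn f hmaps hinj (Set.toFinite _)
    · -- v in row 1, v ≠ (1,u)
      obtain ⟨i, x⟩ := v
      simp only at hv1
      subst hv1
      have hxu : x ≠ u := fun h => hvne (by rw [h])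
      have hdiff : ∀ p ∈ closedNbhd G ((1 : Fin 4), x) \ S,
          p.1 = 0 ∨ p = ((1 : Fin 4), u) := by
        rintro ⟨j, y⟩ ⟨hpN, hpS⟩
        rw [hmemN] at hpN
        rw [hmemS] at hpS
        push_neg at hpS
        obtain ⟨hj2, hj1⟩ := hpS
        simp only at hj2 hj1
        rcases hpN with heq | hadj'
        · right
          exact hj1 (congrArg Prod.fst heq)
        · rw [hadj] at hadj'
          rcases hadj' with (h | h) | ⟨h, _⟩
          · have h' : (1 : ℕ) + 1 = (j : ℕ) := h
            exact absurd (by rw [Fin.ext_iff, show ((2 : Fin 4) : ℕ) = 2 from rfl]; omega : j = 2) hj2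
          · left
            have h' : (j : ℕ) + 1 = 1 := h
            show j = 0
            rw [Fin.ext_iff, show ((0 : Fin 4) : ℕ) = 0 from rfl]
            omega
          · exact Or.inr (hj1 h.symm)
      set f : Fin 4 × Fin (k+3) → Fin 4 × Fin (k+3) := fun p =>
        if p.1 = 0 then ((2 : Fin 4), p.2) else ((1 : Fin 4), x) with hf
      have hmaps : ∀ p ∈ closedNbhd G ((1 : Fin 4), x) \ S,
          f p ∈ closedNbhd G ((1 : Fin 4), x) ∩ S := by
        intro p hp
        rcases hdiff p hp with hp0 | hpu
        · simp only [hf, if_pos hp0]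
          refine ⟨(hmemN _ _).mpr (Or.inr ?_), (hmemS _).mpr (Or.inl rfl)⟩
          rw [hadj]; left; left; rfl
        · have : p.1 ≠ 0 := by
            rw [hpu]
            intro h
            have h' : (1 : Fin 4) = 0 := h
            exact absurd h' (by decide)
          simp only [hf, if_neg this]
          exact ⟨(hmemN _ _).mpr (Or.inl rfl), hv⟩
      have hinj : Set.InjOn f (closedNbhd G ((1 : Fin 4), x) \ S) := by
        intro p hp q hq hfpq
        rcases hdiff p hp with hp0 | hpu
        · rcases hdiff q hq with hq0 | hqu
          · simp only [hf, if_pos hp0, if_pos hq0] at hfpq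
            injection hfpq with h1 h2
            exact Prod.ext (hp0.trans hq0.symm) h2
          · have hq1 : q.1 ≠ 0 := by
              rw [hqu]; intro h
              have h' : (1 : Fin 4) = 0 := h
              exact absurd h' (by decide)
            simp only [hf, if_pos hp0, if_neg hq1] at hfpq
            exact absurd hfpq (by simp [Prod.ext_iff])
        · rcases hdiff q hq with hq0 | hqu
          · have hp1 : p.1 ≠ 0 := by
              rw [hpu]; intro h
              have h' : (1 : Fin 4) = 0 := h
              exact absurd h' (by decide)
            simp only [hf, if_neg hp1, if_pos hq0] at hfpq
            exact absurd hfpq (by simp [Prod.ext_iff])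
          · exact hpu.trans hqu.symm
      exact Set.ncard_le_ncard_of_injOn f hmaps hinj (Set.toFinite _)
  · -- dominating
    rintro ⟨i, y⟩
    fin_cases i
    · right
      refine ⟨((1 : Fin 4), u + 1), (hmemS _).mpr (Or.inr ⟨rfl, fun h => ?_⟩), ?_⟩
      · exact aux_add_one_ne k u (congrArg Prod.snd h)
      · rw [hadj]; left; left; rfl
    · by_cases hy : y = u
      · right
        exact ⟨((2 : Fin 4), y), (hmemS _).mpr (Or.inl rfl), by rw [hadj]; left; left; rfl⟩
      · left
        exact (hmemS _).mpr (Or.inr ⟨rfl, fun h => hy (congrArg Prod.snd h)⟩)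
    · left
      exact (hmemS _).mpr (Or.inl rfl)
    · right
      exact ⟨((2 : Fin 4), y), (hmemS _).mpr (Or.inl rfl), by rw [hadj]; left; right; rfl⟩
  · -- cardinality
    have hd : Disjoint {p : Fin 4 × Fin (k+3) | p.1 = 2}
        ({p : Fin 4 × Fin (k+3) | p.1 = 1} \ {((1 : Fin 4), u)}) := by
      rw [Set.disjoint_left]
      rintro p hp ⟨hq, -⟩
      rw [Set.mem_setOf_eq] at hp hq
      rw [hp] at hq
      exact absurd hq (by decide)
    rw [Set.ncard_union_eq hd (Set.toFinite _) (Set.toFinite _),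
      Set.ncard_diff_singleton_of_mem
        (show ((1 : Fin 4), u) ∈ {p : Fin 4 × Fin (k+3) | p.1 = 1} from rfl),
      aux_row_ncard, aux_row_ncard]
    omega
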